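/- On ℝ⁴ with coordinates (x,y,z,w), let k > 0 and consider the SL(2,ℝ) frame X1(p) = k·(y, x, w, z), X2(p) = k·(x, −y, z, −w), and let f(x,y,z,w) = y − z. Then for every p = (x,y,z,w) with xw − yz = 1 and y = z, one has X1f(p) = 0 and X2f(p) = 0 if and only if p = (1,0,0,1) or p = (−1,0,0,−1). That is, the surface {y = z} ∩ {xw − yz = 1} has exactly two characteristic points, corresponding to ± the identity matrix. -/

import Mathlib

noncomputable def Lsl2 : (ℝ × ℝ × ℝ × ℝ) →L[ℝ] ℝ :=
  ((ContinuousLinearMap.fst ℝ ℝ (ℝ × ℝ)).comp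
      (ContinuousLinearMap.snd ℝ ℝ (ℝ × ℝ × ℝ))) -
  ((ContinuousLinearMap.fst ℝ ℝ ℝ).comp
      ((ContinuousLinearMap.snd ℝ ℝ (ℝ × ℝ)).comp
        (ContinuousLinearMap.snd ℝ ℝ (ℝ × ℝ × ℝ))))

lemma Lsl2_apply (v : ℝ × ℝ × ℝ × ℝ) : Lsl2 v = v.2.1 - v.2.2.1 := rfl

lemma fderiv_fsl2 (p : ℝ × ℝ × ℝ × ℝ) :
    fderiv ℝ (fun p : ℝ × ℝ × ℝ × ℝ => p.2.1 - p.2.2.1) p = Lsl2 := by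
  have : HasFDerivAt (fun p : ℝ × ℝ × ℝ × ℝ => p.2.1 - p.2.2.1) Lsl2 p := by
    have := Lsl2.hasFDerivAt (x := p)
    rwa [show (⇑Lsl2) = fun p : ℝ × ℝ × ℝ × ℝ => p.2.1 - p.2.2.1 from funext Lsl2_apply] at this
  exact this.fderiv

/-- for the `SL(2,ℝ)` frame `X1 = k(y,x,w,z)`, `X2 = k(x,−y,z,−w)` and
the defining function `f = y − z`, on the surface `{y = z} ∩ {xw − yz = 1}` the
horizontal derivatives `X1f`, `X2f` both vanish exactly at `±(1,0,0,1)`, i.e. the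
surface has exactly two characteristic points, corresponding to `±` the identity
matrix. -/
theorem sl2_model_surface_characteristic_points
    (k : ℝ) (hk : 0 < k)
    (X1 X2 : ℝ × ℝ × ℝ × ℝ → ℝ × ℝ × ℝ × ℝ)
    (hX1 : X1 = fun p => (k * p.2.1, k * p.1, k * p.2.2.2, k * p.2.2.1))
    (hX2 : X2 = fun p => (k * p.1, -(k * p.2.1), k * p.2.2.1, -(k * p.2.2.2)))
    (f : ℝ × ℝ × ℝ × ℝ → ℝ) (hf : f = fun p => p.2.1 - p.2.2.1) :
    ∀ p : ℝ × ℝ × ℝ × ℝ,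
      p.1 * p.2.2.2 - p.2.1 * p.2.2.1 = 1 → p.2.1 = p.2.2.1 →
      ((fderiv ℝ f p (X1 p) = 0 ∧ fderiv ℝ f p (X2 p) = 0) ↔
        (p = (1, 0, 0, 1) ∨ p = (-1, 0, 0, -1))) := by
  intro p hsl hyz
  obtain ⟨x, y, z, w⟩ := p
  simp only [hf, hX1, hX2, fderiv_fsl2, Lsl2_apply] at *
  constructor
  · rintro ⟨h1, h2⟩
    -- h1 : k*x - k*w = 0, h2 : -(k*y) - k*z = 0
    have hk' : k ≠ 0 := ne_of_gt hk
    have hxw : x = w := by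
      have : k * (x - w) = 0 := by ring_nf; ring_nf at h1; linarith
      rcases mul_eq_zero.1 this with h | h
      · exact absurd h hk'
      · linarith
    have hy0 : y = 0 := by
      have : k * (y + z) = 0 := by ring_nf; ring_nf at h2; linarith
      rcases mul_eq_zero.1 this with h | h
      · exact absurd h hk'
      · linarith
    have hz0 : z = 0 := by linarith
    subst hxw hy0 hz0
    have : (x - 1) * (x + 1) = 0 := by nlinarith
    rcases mul_eq_zero.1 this with h | h
    · left; simp [Prod.ext_iff]; linarith
    · right; simp [Prod.ext_iff]; linarith
  · rintro (h | h) <;> simp_all
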